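/- Let (kₙ) be a strictly increasing sequence of positive integers with ∑ 1/kₙ < ∞, and let B be the backward shift on ℓ², B(x₁,x₂,x₃,…) = (x₂,x₃,…). Then for any reals 1 < μ₀ < M₀, there is no x ∈ ℓ² such that for every λ ∈ [μ₀, M₀] the set {(λB)^{kₙ}(x) : n ∈ ℕ} is dense in ℓ². In particular ⋂_{λ ∈ (1,∞)} HC({(λB)^{kₙ}}) = ∅. -/

import Mathlib

open MeasureTheory Filter Set

lemma aux_Bpow (B : lp (fun _ : ℕ => ℂ) 2 →L[ℂ] lp (fun _ : ℕ => ℂ) 2)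
    (hB : ∀ (x : lp (fun _ : ℕ => ℂ) 2) (n : ℕ), B x n = x (n + 1)) :
    ∀ (m : ℕ) (x : lp (fun _ : ℕ => ℂ) 2) (n : ℕ), ((B ^ m) x) n = x (n + m) := by
  intro m
  induction m with
  | zero => intro x n; simp
  | succ m ih =>
    intro x n
    rw [pow_succ, ContinuousLinearMap.mul_apply, ih, hB, Nat.add_assoc]

lemma aux_coord (B : lp (fun _ : ℕ => ℂ) 2 →L[ℂ] lp (fun _ : ℕ => ℂ) 2)
    (hB : ∀ (x : lp (fun _ : ℕ => ℂ) 2) (n : ℕ), B x n = x (n + 1))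
    (l : ℂ) (x : lp (fun _ : ℕ => ℂ) 2) (m : ℕ) :
    (((l • B) ^ m) x) 0 = l ^ m * x m := by
  rw [smul_pow, ContinuousLinearMap.smul_apply, lp.coeFn_smul, Pi.smul_apply,
      aux_Bpow B hB, zero_add, smul_eq_mul]

theorem stmt_4 (k : ℕ → ℕ) (hk : StrictMono k) (hkpos : ∀ n, 0 < k n)
    (hsum : Summable (fun n => (1 : ℝ) / k n))
    (B : lp (fun _ : ℕ => ℂ) 2 →L[ℂ] lp (fun _ : ℕ => ℂ) 2)
    (hB : ∀ (x : lp (fun _ : ℕ => ℂ) 2) (n : ℕ), B x n = x (n + 1))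
    (μ₀ M₀ : ℝ) (hμ₀ : 1 < μ₀) (hM₀ : μ₀ < M₀) :
    (¬ ∃ x : lp (fun _ : ℕ => ℂ) 2, ∀ l : ℝ, l ∈ Set.Icc μ₀ M₀ →
      Dense (Set.range fun n => (((l : ℂ) • B) ^ k n) x)) ∧
    (⋂ l ∈ Set.Ioi (1:ℝ),
      {x : lp (fun _ : ℕ => ℂ) 2 |
        Dense (Set.range fun n => (((l : ℂ) • B) ^ k n) x)}) = ∅ := by
  have key : ¬ ∃ x : lp (fun _ : ℕ => ℂ) 2, ∀ l : ℝ, l ∈ Set.Icc μ₀ M₀ →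
      Dense (Set.range fun n => (((l : ℂ) • B) ^ k n) x) := by
    rintro ⟨x, hx⟩
    set e0 : lp (fun _ : ℕ => ℂ) 2 := lp.single 2 0 1 with he0
    have he00 : (e0 : ℕ → ℂ) 0 = 1 := by
      rw [he0, lp.single_apply]
      simp
    have hnt : Nontrivial (lp (fun _ : ℕ => ℂ) 2) := by
      refine ⟨e0, 0, fun h => ?_⟩
      have := congrArg (fun f : lp (fun _ : ℕ => ℂ) 2 => (f : ℕ → ℂ) 0) h
      simp only [he00, lp.coeFn_zero, Pi.zero_apply] at this
      exact one_ne_zero this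
    -- For each l in [μ₀, M₀], the set of good n is infinite
    have hinf : ∀ l : ℝ, l ∈ Set.Icc μ₀ M₀ →
        {n : ℕ | ‖(((l : ℂ) • B) ^ k n) x - e0‖ < 1/2}.Infinite := by
      intro l hl
      by_contra hfin
      rw [Set.not_infinite] at hfin
      set P : Set (lp (fun _ : ℕ => ℂ) 2) :=
        (fun n => (((l : ℂ) • B) ^ k n) x) '' {n : ℕ | ‖(((l : ℂ) • B) ^ k n) x - e0‖ < 1/2}
        with hPdef
      have hP : P.Finite := hfin.image _
      have hU : IsOpen (Metric.ball e0 (1/2) ∩ Pᶜ) :=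
        Metric.isOpen_ball.inter hP.isClosed.isOpen_compl
      have hUne : (Metric.ball e0 (1/2) ∩ Pᶜ).Nonempty := by
        have hPc : Dense Pᶜ := hP.countable.dense_compl ℂ
        exact hPc.inter_open_nonempty (Metric.ball e0 (1/2)) Metric.isOpen_ball
          ⟨e0, Metric.mem_ball_self (by norm_num)⟩
      obtain ⟨y, hy1, hy2⟩ := (hx l hl).exists_mem_open hU hUne
      obtain ⟨n, rfl⟩ := hy1
      have hn : n ∈ {n : ℕ | ‖(((l : ℂ) • B) ^ k n) x - e0‖ < 1/2} := by
        have := hy2.1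
        rwa [Metric.mem_ball, dist_eq_norm] at this
      exact hy2.2 ⟨n, hn, rfl⟩
    -- coordinate estimate
    have hcoordbd : ∀ l : ℝ, 0 < l → ∀ n : ℕ, ‖(((l : ℂ) • B) ^ k n) x - e0‖ < 1/2 →
        1/2 < l ^ (k n) * ‖x (k n)‖ ∧ l ^ (k n) * ‖x (k n)‖ < 3/2 := by
      intro l hl n hn
      set y : lp (fun _ : ℕ => ℂ) 2 := (((l : ℂ) • B) ^ k n) x with hy
      have h0 : ‖(y : ℕ → ℂ) 0 - 1‖ < 1/2 := by
        have h1 := lp.norm_apply_le_norm (by norm_num : (2 : ENNReal) ≠ 0) (y - e0) 0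
        rw [lp.coeFn_sub, Pi.sub_apply, he00] at h1
        exact lt_of_le_of_lt h1 hn
      have hy0 : (y : ℕ → ℂ) 0 = (l : ℂ) ^ (k n) * x (k n) := aux_coord B hB _ x _
      have hnorm : ‖(y : ℕ → ℂ) 0‖ = l ^ (k n) * ‖x (k n)‖ := by
        rw [hy0, norm_mul, norm_pow, Complex.norm_real, Real.norm_eq_abs, abs_of_pos hl]
      have h2 : |‖(y : ℕ → ℂ) 0‖ - 1| < 1/2 := by
        have := abs_norm_sub_norm_le ((y : ℕ → ℂ) 0) 1
        rw [norm_one] at this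
        exact lt_of_le_of_lt this h0
      rw [abs_lt] at h2
      rw [← hnorm]
      constructor <;> linarith [h2.1, h2.2]
    -- the predicate
    set p : ℕ → ℝ → Prop := fun n t =>
      1/2 < Real.exp (k n * t) * ‖x (k n)‖ ∧ Real.exp (k n * t) * ‖x (k n)‖ < 3/2 with hp
    have hLpos : (0:ℝ) < Real.log (3/2) - Real.log (1/2) := by
      have := Real.log_lt_log (by norm_num : (0:ℝ) < 1/2) (by norm_num : (1:ℝ)/2 < 3/2)
      linarith
    -- measure bound
    have hmeas : ∀ n, volume {t : ℝ | p n t} ≤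
        ENNReal.ofReal ((Real.log (3/2) - Real.log (1/2)) / k n) := by
      intro n
      rcases eq_or_lt_of_le (norm_nonneg (x (k n))) with h0 | h0
      · have hempty : {t : ℝ | p n t} = ∅ := by
          ext t
          simp only [hp, Set.mem_setOf_eq, Set.mem_empty_iff_false, iff_false, not_and]
          intro h1
          rw [← h0, mul_zero] at h1
          norm_num at h1
        rw [hempty]
        simp
      · have hknpos : (0:ℝ) < k n := by exact_mod_cast hkpos n
        have hsub : {t : ℝ | p n t} ⊆ Set.Ioo
            ((Real.log (1/2) - Real.log ‖x (k n)‖) / k n)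
            ((Real.log (3/2) - Real.log ‖x (k n)‖) / k n) := by
          intro t ht
          obtain ⟨h1, h2⟩ := ht
          have hlog1 : Real.log (1/2) < (k n) * t + Real.log ‖x (k n)‖ := by
            have := Real.log_lt_log (by norm_num : (0:ℝ) < 1/2) h1
            rwa [Real.log_mul (Real.exp_ne_zero _) (ne_of_gt h0), Real.log_exp] at this
          have hlog2 : (k n) * t + Real.log ‖x (k n)‖ < Real.log (3/2) := by
            have := Real.log_lt_log (by positivity) h2
            rwa [Real.log_mul (Real.exp_ne_zero _) (ne_of_gt h0), Real.log_exp] at this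
          constructor
          · rw [div_lt_iff₀ hknpos]
            linarith
          · rw [lt_div_iff₀ hknpos]
            linarith
        calc volume {t : ℝ | p n t} ≤ volume (Set.Ioo _ _) := measure_mono hsub
          _ = ENNReal.ofReal ((Real.log (3/2) - Real.log ‖x (k n)‖) / k n -
              (Real.log (1/2) - Real.log ‖x (k n)‖) / k n) := Real.volume_Ioo
          _ = ENNReal.ofReal ((Real.log (3/2) - Real.log (1/2)) / k n) := by
            congr 1
            field_simp
            ring
    -- summability
    have hsum2 : Summable (fun n => (Real.log (3/2) - Real.log (1/2)) / (k n : ℝ)) := by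
      have := hsum.mul_left (Real.log (3/2) - Real.log (1/2))
      simpa [mul_one_div, div_eq_mul_inv] using this
    have htsum : (∑' n, volume {t : ℝ | p n t}) ≠ ⊤ := by
      refine ne_top_of_le_ne_top ?_ (ENNReal.tsum_le_tsum hmeas)
      rw [← ENNReal.ofReal_tsum_of_nonneg
        (fun n => div_nonneg hLpos.le (Nat.cast_nonneg _)) hsum2]
      exact ENNReal.ofReal_ne_top
    have hzero : volume {t : ℝ | ∃ᶠ n in atTop, p n t} = 0 :=
      MeasureTheory.measure_setOf_frequently_eq_zero htsum
    -- the interval is contained in the frequently set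
    have hsubset : Set.Icc (Real.log μ₀) (Real.log M₀) ⊆ {t : ℝ | ∃ᶠ n in atTop, p n t} := by
      intro t ht
      have hμ₀pos : (0:ℝ) < μ₀ := lt_trans one_pos hμ₀
      have hlmem : Real.exp t ∈ Set.Icc μ₀ M₀ := by
        constructor
        · rw [← Real.exp_log hμ₀pos]
          exact Real.exp_le_exp.mpr ht.1
        · rw [← Real.exp_log (lt_trans hμ₀pos hM₀)]
          exact Real.exp_le_exp.mpr ht.2
      have hinf' := hinf _ hlmem
      rw [Set.mem_setOf_eq, Nat.frequently_atTop_iff_infinite]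
      refine Set.Infinite.mono ?_ hinf'
      intro n hn
      have hbd := hcoordbd (Real.exp t) (Real.exp_pos t) n hn
      rw [← Real.exp_nat_mul] at hbd
      exact hbd
    -- contradiction
    have hpos : 0 < volume (Set.Icc (Real.log μ₀) (Real.log M₀)) := by
      rw [Real.volume_Icc]
      apply ENNReal.ofReal_pos.mpr
      have := Real.log_lt_log (lt_trans one_pos hμ₀) hM₀
      linarith
    have hle := measure_mono hsubset (μ := volume)
    rw [hzero] at hle
    exact absurd (le_antisymm hle (by simp)) (ne_of_gt hpos)
  refine ⟨key, ?_⟩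
  rw [Set.eq_empty_iff_forall_notMem]
  intro x hxmem
  apply key
  refine ⟨x, fun l hl => ?_⟩
  exact Set.mem_iInter₂.mp hxmem l (lt_of_lt_of_le hμ₀ hl.1)
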